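/- With the cyclic products I_ℓ := ∏_{j=1}^n G(v_j,…,v_{j+ℓ−1}) of Gram determinants of n vectors v₁,…,v_n in a real inner product space (indices mod n), for every ℓ ∈ {1,…,n} one has I_ℓ ≥ (G(v₁,…,v_n))^ℓ. -/

import Mathlib

open Matrix Finset

set_option linter.unusedSectionVars false

section Gram

variable {H : Type*} [NormedAddCommGroup H] [InnerProductSpace ℝ H]

variable {H : Type*} [NormedAddCommGroup H] [InnerProductSpace ℝ H]

/-- The Gram matrix of a family of vectors. -/
noncomputable def gramMat {ι : Type*} (w : ι → H) : Matrix ι ι ℝ :=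
  Matrix.of fun a b => (inner ℝ (w a) (w b) : ℝ)

lemma gramMat_dot {ι : Type*} [Fintype ι] (w : ι → H) (x : ι → ℝ) :
    star x ⬝ᵥ gramMat w *ᵥ x = (inner ℝ (∑ a, x a • w a) (∑ b, x b • w b) : ℝ) := by
  have h1 : ∀ a, (inner ℝ (w a) (∑ b, x b • w b) : ℝ) = ∑ b, (inner ℝ (w a) (w b) : ℝ) * x b := by
    intro a
    rw [inner_sum]
    refine Finset.sum_congr rfl fun b _ => ?_
    rw [real_inner_smul_right]
    ring
  rw [sum_inner]
  simp only [real_inner_smul_left, h1]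
  simp only [dotProduct, Matrix.mulVec, Pi.star_apply, star_trivial, gramMat,
    Matrix.of_apply]

lemma gramMat_posSemidef {ι : Type*} [Fintype ι] (w : ι → H) : (gramMat w).PosSemidef := by
  rw [Matrix.posSemidef_iff_dotProduct_mulVec]; constructor
  · ext a b
    simp [gramMat, Matrix.conjTranspose_apply, real_inner_comm]
  · intro x
    rw [gramMat_dot]
    exact real_inner_self_nonneg

lemma gramMat_det_nonneg {ι : Type*} [Fintype ι] [DecidableEq ι] (w : ι → H) :
    0 ≤ (gramMat w).det := by
  exact (gramMat_posSemidef w).det_nonneg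

lemma gramMat_posDef {ι : Type*} [Fintype ι] (w : ι → H) (hw : LinearIndependent ℝ w) :
    (gramMat w).PosDef := by
  refine Matrix.PosDef.of_dotProduct_mulVec_pos (gramMat_posSemidef w).1 fun x hx => ?_
  rw [gramMat_dot, real_inner_self_eq_norm_sq]
  have hy : (∑ a, x a • w a) ≠ 0 := by
    intro h
    exact hx (funext fun i => Fintype.linearIndependent_iff.mp hw x h i)
  exact pow_pos (norm_pos_iff.mpr hy) 2

lemma linearIndependent_of_gramMat_det_ne_zero {ι : Type*} [Fintype ι] [DecidableEq ι]
    (w : ι → H) (h : (gramMat w).det ≠ 0) : LinearIndependent ℝ w := by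
  rw [Fintype.linearIndependent_iff]
  intro c hc i
  have hMc : gramMat w *ᵥ c = 0 := by
    funext a
    simp only [Matrix.mulVec, dotProduct, gramMat, Matrix.of_apply, Pi.zero_apply]
    have h2 : ∀ b, (inner ℝ (w a) (w b) : ℝ) * c b = (inner ℝ (w a) (c b • w b) : ℝ) := by
      intro b
      rw [real_inner_smul_right]
      ring
    simp only [h2]
    rw [← inner_sum, hc, inner_zero_right]
  have hinj : Function.Injective (gramMat w).mulVec :=
    Matrix.mulVec_injective_iff_isUnit.mpr ((Matrix.isUnit_iff_isUnit_det _).2 h.isUnit)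
  have hc0 : c = 0 := hinj (by rw [hMc, Matrix.mulVec_zero])
  simp [hc0]

end Gram

section Gram2
variable {H : Type*} [NormedAddCommGroup H] [InnerProductSpace ℝ H]

lemma gram_snoc {k : ℕ} (w : Fin k → H) (x : H)
    [inst : Submodule.HasOrthogonalProjection (Submodule.span ℝ (Set.range w))] :
    (gramMat (Fin.snoc w x)).det =
      (gramMat w).det *
        ‖x - (Submodule.orthogonalProjectionOnto (Submodule.span ℝ (Set.range w)) x : H)‖ ^ 2 := by
  set U := Submodule.span ℝ (Set.range w) with hU
  set p : H := (Submodule.orthogonalProjectionOnto U x : H) with hp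
  set q : H := x - p with hq
  have hqU : ∀ u ∈ U, (inner ℝ u q : ℝ) = 0 := fun u hu =>
    (Submodule.mem_orthogonal U q).mp (Submodule.sub_starProjection_mem_orthogonal x) u hu
  have hpU : p ∈ U := (Submodule.orthogonalProjectionOnto U x).2
  obtain ⟨c, hc⟩ := (Submodule.mem_span_range_iff_exists_fun ℝ).mp hpU
  set M : Matrix (Fin (k+1)) (Fin (k+1)) ℝ := gramMat (Fin.snoc w x) with hM
  set e : Fin (k+1) → ℝ := fun j => if j = Fin.last k then 1 else 0 with he
  set A : Matrix (Fin (k+1)) (Fin (k+1)) ℝ :=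
    M.updateRow (Fin.last k) (fun j => ‖q‖ ^ 2 * e j) with hA
  set c' : Fin (k+1) → ℝ := fun i => if h : i = Fin.last k then 0 else c (i.castPred h) with hc'
  -- key pointwise identity for the last row
  have hrow : ∀ j, M (Fin.last k) j = ‖q‖ ^ 2 * e j + ∑ i : Fin k, c i * M i.castSucc j := by
    intro j
    have hMrow : ∀ (i : Fin k) (j), M i.castSucc j
        = (inner ℝ (w i) ((Fin.snoc w x : Fin (k+1) → H) j) : ℝ) := by
      intro i j; simp [hM, gramMat, Fin.snoc_castSucc]
    have hsum : ∀ y : H, ∑ i : Fin k, c i * (inner ℝ (w i) y : ℝ) = (inner ℝ p y : ℝ) := by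
      intro y
      rw [← hc, sum_inner]
      exact Finset.sum_congr rfl fun i _ => (real_inner_smul_left _ _ _).symm
    refine Fin.lastCases ?_ ?_ j
    · -- j = last
      have h1 : M (Fin.last k) (Fin.last k) = (inner ℝ x x : ℝ) := by
        simp [hM, gramMat, Fin.snoc_last]
      rw [h1]
      have h2 : ∑ i : Fin k, c i * M i.castSucc (Fin.last k) = (inner ℝ p x : ℝ) := by
        rw [show (∑ i : Fin k, c i * M i.castSucc (Fin.last k))
            = ∑ i : Fin k, c i * (inner ℝ (w i) x : ℝ) from Finset.sum_congr rfl
            (fun i _ => by rw [hMrow]; simp [Fin.snoc_last])]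
        exact hsum x
      rw [h2]
      have hpq : p + q = x := by rw [hq]; abel
      have hxq : (inner ℝ x x : ℝ) = (inner ℝ p x : ℝ) + (inner ℝ q x : ℝ) := by
        conv_lhs => rw [← hpq]
        rw [inner_add_left, hpq]
      have hqx : (inner ℝ q x : ℝ) = ‖q‖ ^ 2 := by
        have h5 : (inner ℝ q x : ℝ) = (inner ℝ q p : ℝ) + (inner ℝ q q : ℝ) := by
          conv_lhs => rw [← hpq]
          rw [inner_add_right]
        have h6 : (inner ℝ q p : ℝ) = 0 := by rw [real_inner_comm]; exact hqU p hpU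
        rw [h5, h6, real_inner_self_eq_norm_sq, zero_add]
      rw [hxq, hqx, he]
      simp [add_comm]
    · -- j = castSucc b
      intro b
      have h1 : M (Fin.last k) b.castSucc = (inner ℝ x (w b) : ℝ) := by
        simp [hM, gramMat, Fin.snoc_last, Fin.snoc_castSucc]
      have h2 : ∑ i : Fin k, c i * M i.castSucc b.castSucc
          = ∑ i : Fin k, c i * (inner ℝ (w i) (w b) : ℝ) := by
        refine Finset.sum_congr rfl fun i _ => ?_
        rw [hMrow]; simp [Fin.snoc_castSucc]
      have h3 : (inner ℝ x (w b) : ℝ) = (inner ℝ p (w b) : ℝ) := by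
        have : (inner ℝ q (w b) : ℝ) = 0 := by
          rw [real_inner_comm]; exact hqU _ (Submodule.subset_span (Set.mem_range_self b))
        have hx : x = p + q := by rw [hq]; abel
        rw [hx, inner_add_left, this, add_zero]
      have h4 : e b.castSucc = 0 := by
        rw [he]; simp [(Fin.castSucc_lt_last b).ne]
      rw [h1, h2, hsum, h3, h4, mul_zero, zero_add]
  -- M is A with the last row replaced by a combination of A's rows
  have hMA : M = A.updateRow (Fin.last k)
      ((1:ℝ) • A (Fin.last k) + ∑ m ∈ Finset.univ.erase (Fin.last k), c' m • A m) := by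
    ext i j
    by_cases hi : i = Fin.last k
    · subst hi
      rw [Matrix.updateRow_self]
      have hAm : ∀ m, m ≠ Fin.last k → A m = M m := fun m hm => Matrix.updateRow_ne hm
      have hsum2 : (∑ m ∈ Finset.univ.erase (Fin.last k), c' m • A m)
          = ∑ m ∈ Finset.univ.erase (Fin.last k), c' m • M m := by
        refine Finset.sum_congr rfl fun m hm => ?_
        rw [hAm m (Finset.ne_of_mem_erase hm)]
      have hsum3 : (∑ m ∈ Finset.univ.erase (Fin.last k), c' m • M m)
          = ∑ m : Fin (k+1), c' m • M m := by
        refine Finset.sum_erase _ ?_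
        rw [hc']; simp
      have hsum4 : (∑ m : Fin (k+1), c' m • M m) j = ∑ i : Fin k, c i * M i.castSucc j := by
        rw [Finset.sum_apply]
        rw [Fin.sum_univ_castSucc (f := fun m => (c' m • M m) j)]
        have hlast : (c' (Fin.last k) • M (Fin.last k)) j = 0 := by
          rw [hc']; simp
        rw [hlast, add_zero]
        refine Finset.sum_congr rfl fun i _ => ?_
        have : c' i.castSucc = c i := by
          have hne : i.castSucc ≠ Fin.last k := (Fin.castSucc_lt_last i).ne
          simp [hc', hne]
        rw [Pi.smul_apply, this, smul_eq_mul]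
      rw [Pi.add_apply, hsum2, hsum3, hsum4]
      rw [Pi.smul_apply, one_smul]
      have hAlast : A (Fin.last k) j = ‖q‖ ^ 2 * e j := by
        rw [hA, Matrix.updateRow_self]
      rw [hAlast, hrow j]
    · rw [Matrix.updateRow_ne hi, hA, Matrix.updateRow_ne hi]
  -- compute the determinant
  have hdetMA : M.det = A.det := by
    rw [hMA, Matrix.det_updateRow_sum_aux A (Finset.univ.erase (Fin.last k)) (Finset.univ.notMem_erase (Fin.last k)) c' 1,
      one_smul]
  have hdetA : A.det = ‖q‖ ^ 2 * (M.updateRow (Fin.last k) e).det := by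
    rw [hA]
    have : (fun j => ‖q‖ ^ 2 * e j) = (‖q‖ ^ 2) • e := by funext j; simp
    rw [this, Matrix.det_updateRow_smul]
  -- the bordered determinant equals the Gram determinant of w
  have hB : (M.updateRow (Fin.last k) e).det = (gramMat w).det := by
    set P : Matrix (Fin k ⊕ Fin 1) (Fin k ⊕ Fin 1) ℝ :=
      Matrix.fromBlocks (gramMat w)
        (Matrix.of fun i (_ : Fin 1) => (inner ℝ (w i) x : ℝ)) 0 1 with hP
    have hsub : M.updateRow (Fin.last k) e
        = P.submatrix finSumFinEquiv.symm finSumFinEquiv.symm := by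
      ext i j
      refine Fin.lastCases ?_ ?_ i
      · rw [Matrix.updateRow_self]
        refine Fin.lastCases ?_ ?_ j
        · simp [he, hP, finSumFinEquiv_symm_last, Matrix.fromBlocks]
        · intro b
          have : finSumFinEquiv.symm b.castSucc = Sum.inl b :=
            finSumFinEquiv_symm_apply_castAdd b
          simp [he, hP, finSumFinEquiv_symm_last, this, (Fin.castSucc_lt_last b).ne,
            Matrix.fromBlocks]
      · intro a
        rw [Matrix.updateRow_ne (Fin.castSucc_lt_last a).ne]
        have ha : finSumFinEquiv.symm a.castSucc = Sum.inl a :=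
          finSumFinEquiv_symm_apply_castAdd a
        refine Fin.lastCases ?_ ?_ j
        · simp [hM, gramMat, hP, finSumFinEquiv_symm_last, ha, Matrix.fromBlocks,
            Fin.snoc_castSucc, Fin.snoc_last]
        · intro b
          have hb : finSumFinEquiv.symm b.castSucc = Sum.inl b :=
            finSumFinEquiv_symm_apply_castAdd b
          simp [hM, gramMat, hP, ha, hb, Matrix.fromBlocks, Fin.snoc_castSucc]
    rw [hsub, Matrix.det_submatrix_equiv_self, hP, Matrix.det_fromBlocks_zero₂₁,
      Matrix.det_one, mul_one]
  rw [hdetMA, hdetA, hB]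
  ring

lemma resid_mono {U V : Submodule ℝ H} [Submodule.HasOrthogonalProjection U] [Submodule.HasOrthogonalProjection V]
    (hVU : V ≤ U) (x : H) :
    ‖x - (Submodule.orthogonalProjectionOnto U x : H)‖ ≤ ‖x - (Submodule.orthogonalProjectionOnto V x : H)‖ := by
  rw [← Submodule.starProjection_apply, Submodule.starProjection_minimal]
  refine ciInf_le ⟨0, ?_⟩ (⟨_, hVU (Submodule.orthogonalProjectionOnto V x).2⟩ : U)
  rintro r ⟨y, rfl⟩
  exact norm_nonneg _

lemma gram_kot {k : ℕ} (w : Fin (k + 2) → H) :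
    (gramMat w).det * (gramMat (fun i : Fin k => w i.succ.castSucc)).det ≤
      (gramMat (fun i : Fin (k+1) => w i.castSucc)).det *
        (gramMat (fun i : Fin (k+1) => w i.succ)).det := by
  set init : Fin (k+1) → H := fun i => w i.castSucc with hinit
  set tail : Fin (k+1) → H := fun i => w i.succ with htail
  set mid : Fin k → H := fun i => w i.succ.castSucc with hmid
  set x : H := w (Fin.last (k+1)) with hx
  haveI : FiniteDimensional ℝ (Submodule.span ℝ (Set.range init)) :=
    FiniteDimensional.span_of_finite ℝ (Set.finite_range init)
  haveI : FiniteDimensional ℝ (Submodule.span ℝ (Set.range mid)) :=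
    FiniteDimensional.span_of_finite ℝ (Set.finite_range mid)
  haveI : CompleteSpace (Submodule.span ℝ (Set.range init)) := FiniteDimensional.complete ℝ _
  haveI : CompleteSpace (Submodule.span ℝ (Set.range mid)) := FiniteDimensional.complete ℝ _
  have hw : w = Fin.snoc init x := by
    funext i
    refine Fin.lastCases ?_ ?_ i
    · rw [Fin.snoc_last]
    · intro a; rw [Fin.snoc_castSucc]
  have ht : tail = Fin.snoc mid x := by
    funext i
    refine Fin.lastCases ?_ ?_ i
    · rw [Fin.snoc_last, htail]; simp [Fin.succ_last, hx]
    · intro a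
      rw [Fin.snoc_castSucc]
      show w a.castSucc.succ = w a.succ.castSucc
      rw [Fin.succ_castSucc]
  have e1 : (gramMat w).det = (gramMat init).det *
      ‖x - (Submodule.orthogonalProjectionOnto (Submodule.span ℝ (Set.range init)) x : H)‖ ^ 2 := by
    conv_lhs => rw [hw]
    exact gram_snoc init x
  have e2 : (gramMat tail).det = (gramMat mid).det *
      ‖x - (Submodule.orthogonalProjectionOnto (Submodule.span ℝ (Set.range mid)) x : H)‖ ^ 2 := by
    conv_lhs => rw [ht]
    exact gram_snoc mid x
  have hVU : Submodule.span ℝ (Set.range mid) ≤ Submodule.span ℝ (Set.range init) := by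
    refine Submodule.span_mono ?_
    rintro _ ⟨i, rfl⟩
    exact ⟨i.succ, rfl⟩
  have hd : ‖x - (Submodule.orthogonalProjectionOnto (Submodule.span ℝ (Set.range init)) x : H)‖ ≤
      ‖x - (Submodule.orthogonalProjectionOnto (Submodule.span ℝ (Set.range mid)) x : H)‖ :=
    resid_mono hVU x
  have ha : 0 ≤ (gramMat init).det := gramMat_det_nonneg init
  have hc : 0 ≤ (gramMat mid).det := gramMat_det_nonneg mid
  rw [e1, e2]
  set dU := ‖x - (Submodule.orthogonalProjectionOnto (Submodule.span ℝ (Set.range init)) x : H)‖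
  set dV := ‖x - (Submodule.orthogonalProjectionOnto (Submodule.span ℝ (Set.range mid)) x : H)‖
  calc (gramMat init).det * dU ^ 2 * (gramMat mid).det
      = ((gramMat init).det * (gramMat mid).det) * dU ^ 2 := by ring
    _ ≤ ((gramMat init).det * (gramMat mid).det) * dV ^ 2 :=
        mul_le_mul_of_nonneg_left (pow_le_pow_left₀ (norm_nonneg _) hd 2) (mul_nonneg ha hc)
    _ = (gramMat init).det * ((gramMat mid).det * dV ^ 2) := by ring


end Gram2

/-- discrete concavity interpolation -/
lemma interp (a : ℕ → ℝ) (n ℓ : ℕ) (hℓ : ℓ ≤ n) (h0 : a 0 = 0)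
    (hconc : ∀ k, k + 2 ≤ n → a k + a (k + 2) ≤ 2 * a (k + 1)) :
    (ℓ : ℝ) * a n ≤ (n : ℝ) * a ℓ := by
  rcases eq_or_lt_of_le hℓ with rfl | hlt
  · exact le_rfl
  · set s : ℕ → ℝ := fun k => a (k + 1) - a k with hs
    have skey : ∀ j, j + 1 ≤ n → ∀ i ≤ j, s j ≤ s i := by
      intro j
      induction j with
      | zero =>
          intro _ i hi
          interval_cases i
          exact le_rfl
      | succ m ih =>
          intro hm i hi
          rcases Nat.eq_or_lt_of_le hi with rfl | hi'
          · exact le_rfl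
          · have h1 : s (m + 1) ≤ s m := by
              have := hconc m (by omega)
              simp only [hs]
              linarith
            exact h1.trans (ih (by omega) i (by omega))
    have hsum : ∀ m, a m = ∑ k ∈ Finset.range m, s k := by
      intro m
      rw [Finset.sum_range_sub (f := a), h0, sub_zero]
    have hlow : (ℓ : ℝ) * s ℓ ≤ a ℓ := by
      rw [hsum ℓ]
      have h2 := Finset.card_nsmul_le_sum (Finset.range ℓ) s (s ℓ)
        (fun k hk => skey ℓ (by omega) k (Finset.mem_range.mp hk).le)
      simpa [nsmul_eq_mul] using h2
    have hhigh : a n - a ℓ ≤ ((n : ℝ) - ℓ) * s ℓ := by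
      have h1 : a n - a ℓ = ∑ k ∈ Finset.Ico ℓ n, s k := by
        rw [hsum n, hsum ℓ, Finset.sum_Ico_eq_sub _ hℓ]
      rw [h1]
      have h2 := Finset.sum_le_card_nsmul (Finset.Ico ℓ n) s (s ℓ) (fun k hk => by
        obtain ⟨hk1, hk2⟩ := Finset.mem_Ico.mp hk
        exact skey k (by omega) ℓ hk1)
      have h3 : ((Finset.Ico ℓ n).card : ℝ) = (n : ℝ) - ℓ := by
        rw [Nat.card_Ico, Nat.cast_sub hℓ]
      rw [nsmul_eq_mul, h3] at h2
      exact h2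
    have hl0 : (0:ℝ) ≤ ℓ := Nat.cast_nonneg ℓ
    have hnl : (0:ℝ) ≤ (n:ℝ) - ℓ := by
      have : (ℓ:ℝ) ≤ n := Nat.cast_le.mpr hℓ
      linarith
    have e1 : (ℓ:ℝ) * (a n - a ℓ) ≤ (ℓ:ℝ) * (((n:ℝ) - ℓ) * s ℓ) :=
      mul_le_mul_of_nonneg_left hhigh hl0
    have e2 : ((n:ℝ) - ℓ) * ((ℓ:ℝ) * s ℓ) ≤ ((n:ℝ) - ℓ) * a ℓ :=
      mul_le_mul_of_nonneg_left hlow hnl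
    nlinarith [e1, e2]

/-- The cyclic product `I_ℓ = ∏_{j=1}^n G(v_j, v_{j+1}, …, v_{j+ℓ-1})` of Gram
determinants of `ℓ` cyclically consecutive vectors among `v₁,…,v_n` (indices mod `n`). -/
noncomputable def Icyc {H : Type*} [NormedAddCommGroup H] [InnerProductSpace ℝ H]
    {n : ℕ} [NeZero n] (v : ZMod n → H) (ℓ : ℕ) : ℝ :=
  ∏ j : ZMod n,
    Matrix.det (Matrix.of fun a b : Fin ℓ =>
      (inner ℝ (v (j + ((a : ℕ) : ZMod n))) (v (j + ((b : ℕ) : ZMod n))) : ℝ))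

/-- The Gram determinant `G(v₁,…,v_n)` of the full family. -/
noncomputable def gramFull {H : Type*} [NormedAddCommGroup H] [InnerProductSpace ℝ H]
    {n : ℕ} [NeZero n] (v : ZMod n → H) : ℝ :=
  Matrix.det (Matrix.of fun a b : ZMod n => (inner ℝ (v a) (v b) : ℝ))

section Blocks
variable {H : Type*} [NormedAddCommGroup H] [InnerProductSpace ℝ H] {n : ℕ} [NeZero n]

/-- determinant of the Gram matrix of the length-`k` block starting at `j` -/
noncomputable def bdet (v : ZMod n → H) (j : ZMod n) (k : ℕ) : ℝ :=
  (gramMat fun a : Fin k => v (j + ((a : ℕ) : ZMod n))).det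

lemma Icyc_eq (v : ZMod n → H) (k : ℕ) : Icyc v k = ∏ j, bdet v j k := rfl

lemma gramFull_eq (v : ZMod n → H) : gramFull v = (gramMat v).det := rfl

lemma bdet_nonneg (v : ZMod n → H) (j : ZMod n) (k : ℕ) : 0 ≤ bdet v j k :=
  gramMat_det_nonneg _

lemma Icyc_nonneg (v : ZMod n → H) (k : ℕ) : 0 ≤ Icyc v k := by
  rw [Icyc_eq]
  exact Finset.prod_nonneg fun j _ => bdet_nonneg v j k

lemma bdet_kot (v : ZMod n → H) (j : ZMod n) (k : ℕ) :
    bdet v j (k + 2) * bdet v (j + 1) k ≤ bdet v j (k + 1) * bdet v (j + 1) (k + 1) := by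
  have h := gram_kot (fun a : Fin (k + 2) => v (j + ((a : ℕ) : ZMod n)))
  have e1 : (fun i : Fin (k+1) =>
      (fun a : Fin (k + 2) => v (j + ((a : ℕ) : ZMod n))) i.castSucc)
      = fun a : Fin (k+1) => v (j + ((a : ℕ) : ZMod n)) := by
    funext i
    simp [Fin.coe_castSucc]
  have e2 : (fun i : Fin (k+1) =>
      (fun a : Fin (k + 2) => v (j + ((a : ℕ) : ZMod n))) i.succ)
      = fun a : Fin (k+1) => v ((j + 1) + ((a : ℕ) : ZMod n)) := by
    funext i
    have : j + (((i.succ : Fin (k+2)) : ℕ) : ZMod n) = (j + 1) + ((i : ℕ) : ZMod n) := by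
      rw [Fin.val_succ]
      push_cast
      ring
    exact congrArg v this
  have e3 : (fun i : Fin k =>
      (fun a : Fin (k + 2) => v (j + ((a : ℕ) : ZMod n))) i.succ.castSucc)
      = fun a : Fin k => v ((j + 1) + ((a : ℕ) : ZMod n)) := by
    funext i
    have : j + (((i.succ.castSucc : Fin (k+2)) : ℕ) : ZMod n)
        = (j + 1) + ((i : ℕ) : ZMod n) := by
      rw [Fin.coe_castSucc, Fin.val_succ]
      push_cast
      ring
    exact congrArg v this
  rw [e1, e2, e3] at h
  exact h

lemma prod_shift (f : ZMod n → ℝ) : ∏ j, f (j + 1) = ∏ j, f j :=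
  Fintype.prod_equiv (Equiv.addRight 1) _ _ fun j => rfl

lemma Icyc_logconcave (v : ZMod n → H) (k : ℕ) :
    Icyc v (k + 2) * Icyc v k ≤ Icyc v (k + 1) ^ 2 := by
  rw [Icyc_eq, Icyc_eq, Icyc_eq, sq]
  calc (∏ j, bdet v j (k+2)) * ∏ j, bdet v j k
      = (∏ j, bdet v j (k+2)) * ∏ j, bdet v (j+1) k := by
        rw [prod_shift (fun j => bdet v j k)]
    _ = ∏ j, (bdet v j (k+2) * bdet v (j+1) k) := by rw [Finset.prod_mul_distrib]
    _ ≤ ∏ j, (bdet v j (k+1) * bdet v (j+1) (k+1)) :=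
        Finset.prod_le_prod
          (fun j _ => mul_nonneg (bdet_nonneg v j (k+2)) (bdet_nonneg v (j+1) k))
          (fun j _ => bdet_kot v j k)
    _ = (∏ j, bdet v j (k+1)) * ∏ j, bdet v (j+1) (k+1) := Finset.prod_mul_distrib
    _ = (∏ j, bdet v j (k+1)) * ∏ j, bdet v j (k+1) := by
        rw [prod_shift (fun j => bdet v j (k+1))]

lemma Icyc_zero (v : ZMod n → H) : Icyc v 0 = 1 := by
  rw [Icyc_eq]
  refine Finset.prod_eq_one fun j _ => ?_
  exact Matrix.det_fin_zero

lemma block_inj (v : ZMod n → H) (j : ZMod n) {k : ℕ} (hk : k ≤ n) :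
    Function.Injective (fun a : Fin k => j + ((a : ℕ) : ZMod n)) := by
  intro a b hab
  have h1 : ((a : ℕ) : ZMod n) = ((b : ℕ) : ZMod n) := by
    have := hab
    simpa using add_left_cancel this
  have h2 := congrArg ZMod.val h1
  rw [ZMod.val_cast_of_lt (lt_of_lt_of_le a.isLt hk),
    ZMod.val_cast_of_lt (lt_of_lt_of_le b.isLt hk)] at h2
  exact Fin.ext h2

lemma bdet_top (v : ZMod n → H) (j : ZMod n) : bdet v j n = gramFull v := by
  have hbij : Function.Bijective (fun a : Fin n => j + ((a : ℕ) : ZMod n)) :=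
    (Fintype.bijective_iff_injective_and_card _).mpr
      ⟨block_inj v j le_rfl, by simp [ZMod.card]⟩
  let e : Fin n ≃ ZMod n := Equiv.ofBijective _ hbij
  have hsub : gramMat (fun a : Fin n => v (j + ((a : ℕ) : ZMod n)))
      = (gramMat v).submatrix e e := rfl
  rw [bdet, hsub, Matrix.det_submatrix_equiv_self, gramFull_eq]

lemma Icyc_top (v : ZMod n → H) : Icyc v n = gramFull v ^ n := by
  rw [Icyc_eq]
  rw [Finset.prod_congr rfl fun j _ => bdet_top v j]
  simp [ZMod.card]

lemma bdet_pos (v : ZMod n → H) (hG : gramFull v ≠ 0) (j : ZMod n) {k : ℕ} (hk : k ≤ n) :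
    0 < bdet v j k := by
  have hli : LinearIndependent ℝ v :=
    linearIndependent_of_gramMat_det_ne_zero v hG
  have hli2 : LinearIndependent ℝ (fun a : Fin k => v (j + ((a : ℕ) : ZMod n))) :=
    hli.comp _ (block_inj v j hk)
  exact (gramMat_posDef _ hli2).det_pos

end Blocks

/-- For every `ℓ ∈ {1,…,n}`, `I_ℓ ≥ (G(v₁,…,v_n))^ℓ`. -/
theorem stmt11 {H : Type*} [NormedAddCommGroup H] [InnerProductSpace ℝ H]
    (n : ℕ) [NeZero n] (v : ZMod n → H) (ℓ : ℕ) (h1 : 1 ≤ ℓ) (hn : ℓ ≤ n) :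
    (gramFull v) ^ ℓ ≤ Icyc v ℓ := by
  have hG0 : 0 ≤ gramFull v := by
    rw [gramFull_eq]; exact gramMat_det_nonneg v
  rcases eq_or_lt_of_le hG0 with hG | hG
  · have hzero : gramFull v ^ ℓ = 0 := by
      rw [← hG]
      exact zero_pow (by omega)
    rw [hzero]
    exact Icyc_nonneg v ℓ
  · set a : ℕ → ℝ := fun k => Real.log (Icyc v k) with ha
    have hpos : ∀ k, k ≤ n → 0 < Icyc v k := by
      intro k hk
      rw [Icyc_eq]
      exact Finset.prod_pos fun j _ => bdet_pos v hG.ne' j hk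
    have h0 : a 0 = 0 := by simp [ha, Icyc_zero]
    have hconc : ∀ k, k + 2 ≤ n → a k + a (k + 2) ≤ 2 * a (k + 1) := by
      intro k hk
      have hlc := Icyc_logconcave v k
      have p1 := hpos k (by omega)
      have p2 := hpos (k + 1) (by omega)
      have p3 := hpos (k + 2) hk
      have := Real.log_le_log (by positivity) hlc
      rw [Real.log_mul p3.ne' p1.ne', Real.log_pow] at this
      simp only [ha]
      push_cast at this
      linarith
    have key := interp a n ℓ hn h0 hconc
    have han : a n = (n : ℝ) * Real.log (gramFull v) := by
      rw [ha]
      simp only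
      rw [Icyc_top, Real.log_pow]
    have hn0 : (0:ℝ) < n := by
      have := NeZero.pos n
      positivity
    have hstep : (ℓ : ℝ) * Real.log (gramFull v) ≤ a ℓ := by
      rw [han] at key
      have h2 : (n:ℝ) * ((ℓ:ℝ) * Real.log (gramFull v)) ≤ (n:ℝ) * a ℓ := by linarith
      exact (mul_le_mul_iff_right₀ hn0).mp h2
    have hlog : Real.log (gramFull v ^ ℓ) ≤ Real.log (Icyc v ℓ) := by
      rw [Real.log_pow]
      push_cast
      exact hstep
    exact (Real.log_le_log_iff (by positivity) (hpos ℓ hn)).mp hlog
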